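/- Let Φ : Ran B₀ → Ran B₁ be a linear contraction, 𝒜 ∈ L(V, V') coercive, f ∈ V', and y₀ ∈ Ran B₀. Then there exists a unique u ∈ W such that 𝒟u + 𝒜u = f in V' and B₀u − Φ* B₁u = y₀. -/

import Mathlib

open RCLike Filter Topology

section Helpers

variable {𝕜 V : Type*} [RCLike 𝕜] [NormedAddCommGroup V] [InnerProductSpace 𝕜 V]

/-- conjugate of a continuous conjugate-linear functional, as a linear functional -/
noncomputable def stmt18.conjCLM (g : V →SL[starRingEnd 𝕜] 𝕜) : V →L[𝕜] 𝕜 where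
  toFun x := starRingEnd 𝕜 (g x)
  map_add' x y := by simp
  map_smul' c x := by simp
  cont := continuous_star.comp g.continuous

variable [CompleteSpace V]

/-- Riesz representative of a conjugate-linear functional: `g x = ⟪x, rieszConj g⟫`. -/
noncomputable def stmt18.rieszConj (g : V →SL[starRingEnd 𝕜] 𝕜) : V :=
  (InnerProductSpace.toDual 𝕜 V).symm (stmt18.conjCLM g)

lemma stmt18.rieszConj_spec (g : V →SL[starRingEnd 𝕜] 𝕜) (x : V) :
    g x = (inner 𝕜 x (stmt18.rieszConj g) : 𝕜) := by
  have h : (inner 𝕜 (stmt18.rieszConj g) x : 𝕜) = stmt18.conjCLM g x :=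
    InnerProductSpace.toDual_symm_apply
  have : (inner 𝕜 x (stmt18.rieszConj g) : 𝕜) = starRingEnd 𝕜 (stmt18.conjCLM g x) := by
    rw [← h, inner_conj_symm]
  simpa [stmt18.conjCLM] using this.symm

lemma stmt18.rieszConj_innerSLFlip (z : V) :
    stmt18.rieszConj (innerSLFlip 𝕜 z : V →SL[starRingEnd 𝕜] 𝕜) = z := by
  apply ext_inner_right 𝕜
  intro x
  have h := stmt18.rieszConj_spec ((innerSLFlip 𝕜 z : V →SL[starRingEnd 𝕜] 𝕜)) x
  rw [innerSLFlip_apply_apply] at h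
  have h2 := congrArg (starRingEnd 𝕜) h
  simpa [inner_conj_symm] using h2.symm

lemma stmt18.inner_rieszConj (g : V →SL[starRingEnd 𝕜] 𝕜) (x : V) :
    (inner 𝕜 (stmt18.rieszConj g) x : 𝕜) = starRingEnd 𝕜 (g x) := by
  have h := congrArg (starRingEnd 𝕜) (stmt18.rieszConj_spec g x)
  rw [inner_conj_symm] at h
  exact h.symm

lemma stmt18.rieszConj_add (g h : V →SL[starRingEnd 𝕜] 𝕜) :
    stmt18.rieszConj (g + h) = stmt18.rieszConj g + stmt18.rieszConj h := by
  apply ext_inner_right 𝕜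
  intro x
  rw [inner_add_left, stmt18.inner_rieszConj, stmt18.inner_rieszConj, stmt18.inner_rieszConj]
  simp

lemma stmt18.rieszConj_smul (c : 𝕜) (g : V →SL[starRingEnd 𝕜] 𝕜) :
    stmt18.rieszConj (c • g) = c • stmt18.rieszConj g := by
  apply ext_inner_right 𝕜
  intro x
  rw [inner_smul_left, stmt18.inner_rieszConj, stmt18.inner_rieszConj]
  simp [mul_comm]

lemma stmt18.rieszConj_zero : stmt18.rieszConj (0 : V →SL[starRingEnd 𝕜] 𝕜) = 0 := by
  apply ext_inner_right 𝕜
  intro x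
  rw [stmt18.inner_rieszConj]
  simp

lemma stmt18.rieszConj_inj {g h : V →SL[starRingEnd 𝕜] 𝕜}
    (e : stmt18.rieszConj g = stmt18.rieszConj h) : g = h := by
  ext x
  rw [stmt18.rieszConj_spec g x, stmt18.rieszConj_spec h x, e]

lemma stmt18.sq_le (a b : ℝ) (hb : 0 ≤ b) (h : a^2 ≤ a*b) : a ≤ b := by
  by_contra h'
  push_neg at h'
  nlinarith

lemma stmt18.div_bound (α a b : ℝ) (hα : 0 < α) (ha : 0 ≤ a) (hb : 0 ≤ b)
    (h : α * a^2 ≤ a * b) : a ≤ b / α := by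
  rcases eq_or_lt_of_le ha with h0 | h0
  · rw [← h0]; positivity
  · rw [le_div_iff₀ hα]
    nlinarith

/-- `x ↦ conj (T x w)` as a continuous conjugate-linear functional. -/
noncomputable def stmt18.flipConj (T : V →L[𝕜] (V →SL[starRingEnd 𝕜] 𝕜)) (w : V) :
    V →SL[starRingEnd 𝕜] 𝕜 :=
  LinearMap.mkContinuous
    { toFun := fun x => starRingEnd 𝕜 (T x w)
      map_add' := fun x y => by simp
      map_smul' := fun c x => by simp }
    (‖T‖ * ‖w‖)
    (fun x => by
      simp only [LinearMap.coe_mk, AddHom.coe_mk, RCLike.norm_conj]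
      calc ‖T x w‖ ≤ ‖T x‖ * ‖w‖ := (T x).le_opNorm w
        _ ≤ ‖T‖ * ‖x‖ * ‖w‖ := by
            have := T.le_opNorm x
            have hw : (0:ℝ) ≤ ‖w‖ := norm_nonneg _
            nlinarith [norm_nonneg (T x)]
        _ = ‖T‖ * ‖w‖ * ‖x‖ := by ring)

lemma stmt18.flipConj_apply (T : V →L[𝕜] (V →SL[starRingEnd 𝕜] 𝕜)) (w x : V) :
    stmt18.flipConj T w x = starRingEnd 𝕜 (T x w) := rfl

end Helpers

set_option maxHeartbeats 4000000 in
/-- Theorem 4.12: well-posedness of the derivation problem with boundary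
condition `B₀u - Φ* B₁u = y₀`. Setting: `D0 : R → V'` a derivation on a
Hilbert space `V` with extended domain `Wset` and extension `DD`; `B₀, B₁`
boundary operators into a Hilbert space `H` (linear and bounded on `W` for
the `W`-norm, contained in the kernels on `R`, factorizing the boundary
form and with `ker B₀ + ker B₁ = W`); `Φ : Ran B₀ → Ran B₁` a linear
contraction with adjoint `Ψ = Φ*`; `𝒜 ∈ L(V,V')` coercive; `f ∈ V'`;
`y₀ ∈ Ran B₀`. Then there is a unique `u ∈ W` with `𝒟u + 𝒜u = f` and
`B₀u - Φ* B₁u = y₀`. -/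
theorem stmt18 {𝕜 V H : Type*} [RCLike 𝕜]
    [NormedAddCommGroup V] [InnerProductSpace 𝕜 V] [CompleteSpace V]
    [NormedAddCommGroup H] [InnerProductSpace 𝕜 H] [CompleteSpace H]
    (R : Submodule 𝕜 V) (hR : Dense (R : Set V))
    (D0 : R →ₗ[𝕜] (V →SL[starRingEnd 𝕜] 𝕜))
    (hder : ∀ u v : R, D0 u (v : V) + (starRingEnd 𝕜) (D0 v (u : V)) = 0)
    (Wset : Set V)
    (hWset : Wset = {v : V | ∃ f : V →SL[starRingEnd 𝕜] 𝕜,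
        ∀ r : R, f (r : V) + (starRingEnd 𝕜) (D0 r v) = 0})
    (DD : V → (V →SL[starRingEnd 𝕜] 𝕜))
    (hDD : ∀ v ∈ Wset, ∀ r : R, DD v (r : V) + (starRingEnd 𝕜) (D0 r v) = 0)
    (B₀ B₁ : V → H)
    (hB₀lin : ∀ v ∈ Wset, ∀ w ∈ Wset, ∀ c : 𝕜,
        B₀ (v + w) = B₀ v + B₀ w ∧ B₀ (c • v) = c • B₀ v)
    (hB₁lin : ∀ v ∈ Wset, ∀ w ∈ Wset, ∀ c : 𝕜,
        B₁ (v + w) = B₁ v + B₁ w ∧ B₁ (c • v) = c • B₁ v)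
    (hB₀bdd : ∃ C : ℝ, ∀ v ∈ Wset, ‖B₀ v‖ ≤ C * (‖v‖ + ‖DD v‖))
    (hB₁bdd : ∃ C : ℝ, ∀ v ∈ Wset, ‖B₁ v‖ ≤ C * (‖v‖ + ‖DD v‖))
    (hBR : ∀ r : R, B₀ (r : V) = 0 ∧ B₁ (r : V) = 0)
    (hfact : ∀ v ∈ Wset, ∀ w ∈ Wset,
        DD v w + (starRingEnd 𝕜) (DD w v) =
          (inner 𝕜 (B₁ w) (B₁ v) : 𝕜) - inner 𝕜 (B₀ w) (B₀ v))
    (hker : ∀ w ∈ Wset, ∃ w₀ ∈ Wset, ∃ w₁ ∈ Wset,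
        B₀ w₀ = 0 ∧ B₁ w₁ = 0 ∧ w = w₀ + w₁)
    (Φ Ψ : H →ₗ[𝕜] H)
    (hΦcontr : ∀ v ∈ Wset, ‖Φ (B₀ v)‖ ≤ ‖B₀ v‖)
    (hΦrange : ∀ v ∈ Wset, ∃ w ∈ Wset, Φ (B₀ v) = B₁ w)
    (hΨrange : ∀ v ∈ Wset, ∃ w ∈ Wset, Ψ (B₁ v) = B₀ w)
    (hadj : ∀ v ∈ Wset, ∀ w ∈ Wset,
        (inner 𝕜 (Φ (B₀ v)) (B₁ w) : 𝕜) = inner 𝕜 (B₀ v) (Ψ (B₁ w)))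
    (𝒜 : V →L[𝕜] (V →SL[starRingEnd 𝕜] 𝕜)) (α : ℝ) (hα : 0 < α)
    (hcoer : ∀ u : V, α * ‖u‖ ^ 2 ≤ RCLike.re (𝒜 u u))
    (f : V →SL[starRingEnd 𝕜] 𝕜)
    (y₀ : H) (hy₀ : ∃ v ∈ Wset, B₀ v = y₀) :
    ∃! u : V, u ∈ Wset ∧ DD u + 𝒜 u = f ∧ B₀ u - Ψ (B₁ u) = y₀ := by
  -- two continuous conjugate-linear functionals agreeing on `R` agree
  have densExt : ∀ p q : V →SL[starRingEnd 𝕜] 𝕜,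
      (∀ r : R, p (r : V) = q (r : V)) → p = q := by
    intro p q hpq
    have heq : Set.EqOn p q (R : Set V) := fun x hx => hpq ⟨x, hx⟩
    have := Continuous.ext_on hR p.continuous q.continuous heq
    ext x; exact congrFun this x
  -- `R ⊆ Wset`
  have hRW : ∀ r : R, (r : V) ∈ Wset := by
    intro r
    rw [hWset]
    exact ⟨D0 r, fun s => hder r s⟩
  -- the value of `DD` on `R`
  have hDDval : ∀ v ∈ Wset, ∀ r : R, DD v (r : V) = -(starRingEnd 𝕜) (D0 r v) := by
    intro v hv r
    have := hDD v hv r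
    linear_combination this
  have hDDR : ∀ r : R, DD (r : V) = D0 r := by
    intro r
    apply densExt
    intro s
    rw [hDDval _ (hRW r) s]
    have := hder r s
    linear_combination -this
  -- `Wset` is closed under the module operations, and `DD` is linear there
  have hWadd : ∀ v ∈ Wset, ∀ w ∈ Wset, v + w ∈ Wset := by
    intro v hv w hw
    rw [hWset]
    refine ⟨DD v + DD w, fun r => ?_⟩
    have h1 := hDD v hv r
    have h2 := hDD w hw r
    simp only [ContinuousLinearMap.add_apply, map_add]
    linear_combination h1 + h2
  have hWsmul : ∀ v ∈ Wset, ∀ c : 𝕜, c • v ∈ Wset := by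
    intro v hv c
    rw [hWset]
    refine ⟨c • DD v, fun r => ?_⟩
    have h1 := hDD v hv r
    have e2 : D0 r (c • v) = starRingEnd 𝕜 c * D0 r v := by
      rw [ContinuousLinearMap.map_smulₛₗ, smul_eq_mul]
    rw [ContinuousLinearMap.smul_apply, e2, map_mul, RCLike.conj_conj, smul_eq_mul]
    linear_combination c * h1
  have hW0 : (0 : V) ∈ Wset := by
    rw [hWset]
    exact ⟨0, fun r => by simp⟩
  have hDDadd : ∀ v ∈ Wset, ∀ w ∈ Wset, DD (v + w) = DD v + DD w := by
    intro v hv w hw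
    apply densExt
    intro r
    rw [hDDval _ (hWadd v hv w hw) r]
    simp only [ContinuousLinearMap.add_apply, map_add]
    rw [hDDval v hv r, hDDval w hw r]
    ring
  have hDDsmul : ∀ v ∈ Wset, ∀ c : 𝕜, DD (c • v) = c • DD v := by
    intro v hv c
    apply densExt
    intro r
    rw [hDDval _ (hWsmul v hv c) r]
    have e2 : D0 r (c • v) = starRingEnd 𝕜 c * D0 r v := by
      rw [ContinuousLinearMap.map_smulₛₗ, smul_eq_mul]
    rw [e2, map_mul, RCLike.conj_conj, ContinuousLinearMap.smul_apply, smul_eq_mul,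
      hDDval v hv r]
    ring
  have hWneg : ∀ v ∈ Wset, -v ∈ Wset := by
    intro v hv
    have := hWsmul v hv (-1)
    simpa using this
  have hWsub : ∀ v ∈ Wset, ∀ w ∈ Wset, v - w ∈ Wset := by
    intro v hv w hw
    rw [sub_eq_add_neg]
    exact hWadd v hv _ (hWneg w hw)
  have hDDsub : ∀ v ∈ Wset, ∀ w ∈ Wset, DD (v - w) = DD v - DD w := by
    intro v hv w hw
    have h1 : DD (-w) = -DD w := by
      have h2 := hDDsmul w hw (-1)
      rw [neg_one_smul 𝕜 w, neg_one_smul 𝕜 (DD w)] at h2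
      exact h2
    rw [sub_eq_add_neg, hDDadd v hv _ (hWneg w hw), h1, sub_eq_add_neg]
  -- linearity conveniences for B₀, B₁
  have hB₀add : ∀ v ∈ Wset, ∀ w ∈ Wset, B₀ (v + w) = B₀ v + B₀ w :=
    fun v hv w hw => (hB₀lin v hv w hw 0).1
  have hB₀smul : ∀ v ∈ Wset, ∀ c : 𝕜, B₀ (c • v) = c • B₀ v :=
    fun v hv c => (hB₀lin v hv v hv c).2
  have hB₁add : ∀ v ∈ Wset, ∀ w ∈ Wset, B₁ (v + w) = B₁ v + B₁ w :=
    fun v hv w hw => (hB₁lin v hv w hw 0).1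
  have hB₁smul : ∀ v ∈ Wset, ∀ c : 𝕜, B₁ (c • v) = c • B₁ v :=
    fun v hv c => (hB₁lin v hv v hv c).2
  have hB₀sub : ∀ v ∈ Wset, ∀ w ∈ Wset, B₀ (v - w) = B₀ v - B₀ w := by
    intro v hv w hw
    have h1 : B₀ (-w) = -B₀ w := by
      have := hB₀smul w hw (-1); simpa using this
    rw [sub_eq_add_neg, hB₀add v hv _ (hWneg w hw), h1, sub_eq_add_neg]
  have hB₁sub : ∀ v ∈ Wset, ∀ w ∈ Wset, B₁ (v - w) = B₁ v - B₁ w := by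
    intro v hv w hw
    have h1 : B₁ (-w) = -B₁ w := by
      have := hB₁smul w hw (-1); simpa using this
    rw [sub_eq_add_neg, hB₁add v hv _ (hWneg w hw), h1, sub_eq_add_neg]
  have hB₀0 : B₀ (0 : V) = 0 := by
    have := hB₀smul 0 hW0 0; simpa using this
  have hB₁0 : B₁ (0 : V) = 0 := by
    have := hB₁smul 0 hW0 0; simpa using this
  -- Ψ is a contraction on the range of B₁
  have hΨcontr : ∀ v ∈ Wset, ‖Ψ (B₁ v)‖ ≤ ‖B₁ v‖ := by
    intro v hv
    obtain ⟨w, hw, hww⟩ := hΨrange v hv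
    apply stmt18.sq_le _ _ (norm_nonneg _)
    have h1 : ‖Ψ (B₁ v)‖ ^ 2 = RCLike.re (inner 𝕜 (Ψ (B₁ v)) (Ψ (B₁ v)) : 𝕜) :=
      (inner_self_eq_norm_sq _).symm
    have h2 : (inner 𝕜 (Ψ (B₁ v)) (Ψ (B₁ v)) : 𝕜) = inner 𝕜 (Φ (B₀ w)) (B₁ v) := by
      calc (inner 𝕜 (Ψ (B₁ v)) (Ψ (B₁ v)) : 𝕜) = inner 𝕜 (B₀ w) (Ψ (B₁ v)) := by rw [hww]
        _ = inner 𝕜 (Φ (B₀ w)) (B₁ v) := (hadj w hw v hv).symm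
    rw [h1, h2]
    calc RCLike.re (inner 𝕜 (Φ (B₀ w)) (B₁ v) : 𝕜) ≤ ‖Φ (B₀ w)‖ * ‖B₁ v‖ :=
          re_inner_le_norm _ _
      _ ≤ ‖B₀ w‖ * ‖B₁ v‖ := by
          have := hΦcontr w hw
          have h3 : (0:ℝ) ≤ ‖B₁ v‖ := norm_nonneg _
          nlinarith
      _ = ‖Ψ (B₁ v)‖ * ‖B₁ v‖ := by rw [← hww]
  -- real part of the boundary form
  have hre : ∀ v ∈ Wset, 2 * RCLike.re (DD v v) = ‖B₁ v‖ ^ 2 - ‖B₀ v‖ ^ 2 := by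
    intro v hv
    have h := hfact v hv v hv
    have h2 := congrArg RCLike.re h
    simpa [inner_self_eq_norm_sq, two_mul] using h2
  have hpos : ∀ d ∈ Wset, B₀ d = Ψ (B₁ d) → 0 ≤ RCLike.re (DD d d) := by
    intro d hd hbd
    have h1 := hre d hd
    have h2 : ‖B₀ d‖ ≤ ‖B₁ d‖ := by
      rw [hbd]; exact hΨcontr d hd
    nlinarith [norm_nonneg (B₀ d), norm_nonneg (B₁ d)]
  -- uniqueness
  have uniq : ∀ u₁ u₂ : V,
      (u₁ ∈ Wset ∧ DD u₁ + 𝒜 u₁ = f ∧ B₀ u₁ - Ψ (B₁ u₁) = y₀) →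
      (u₂ ∈ Wset ∧ DD u₂ + 𝒜 u₂ = f ∧ B₀ u₂ - Ψ (B₁ u₂) = y₀) → u₁ = u₂ := by
    intro u₁ u₂ ⟨h1W, h1e, h1b⟩ ⟨h2W, h2e, h2b⟩
    set d := u₁ - u₂ with hd
    have hdW : d ∈ Wset := hWsub u₁ h1W u₂ h2W
    have hDDd : DD d = DD u₁ - DD u₂ := hDDsub u₁ h1W u₂ h2W
    have heq : DD d + 𝒜 d = 0 := by
      rw [hDDd, hd, map_sub]
      rw [show DD u₁ - DD u₂ + (𝒜 u₁ - 𝒜 u₂)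
          = (DD u₁ + 𝒜 u₁) - (DD u₂ + 𝒜 u₂) by abel, h1e, h2e, sub_self]
    have hbd : B₀ d = Ψ (B₁ d) := by
      have : B₀ d - Ψ (B₁ d) = 0 := by
        rw [hd, hB₀sub u₁ h1W u₂ h2W, hB₁sub u₁ h1W u₂ h2W, map_sub]
        rw [show B₀ u₁ - B₀ u₂ - (Ψ (B₁ u₁) - Ψ (B₁ u₂))
            = (B₀ u₁ - Ψ (B₁ u₁)) - (B₀ u₂ - Ψ (B₁ u₂)) by abel, h1b, h2b, sub_self]
      exact sub_eq_zero.mp this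
    have h0' : RCLike.re (DD d d) + RCLike.re (𝒜 d d) = 0 := by
      have h0 : DD d d + 𝒜 d d = 0 := by
        have e : (DD d + 𝒜 d) d = DD d d + 𝒜 d d := rfl
        rw [heq] at e
        simpa using e.symm
      have := congrArg RCLike.re h0
      simpa using this
    have hpd := hpos d hdW hbd
    have hcd := hcoer d
    have hdnorm : ‖d‖ ^ 2 ≤ 0 := by nlinarith
    have : d = 0 := by
      have : ‖d‖ = 0 := by nlinarith [norm_nonneg d, sq_nonneg ‖d‖]
      exact norm_eq_zero.mp this
    exact sub_eq_zero.mp this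

  -- boundary-datum lifting
  obtain ⟨v₀, hv₀W, hv₀y⟩ := hy₀
  obtain ⟨w₀', hw₀'W, w₁', hw₁'W, hBw₀', hBw₁', hsum'⟩ := hker v₀ hv₀W
  have hB₀u₀ : B₀ w₁' = y₀ := by
    have e : B₀ v₀ = B₀ w₀' + B₀ w₁' := by rw [hsum', hB₀add w₀' hw₀'W w₁' hw₁'W]
    rw [hv₀y, hBw₀', zero_add] at e
    exact e.symm
  have hbc₀ : B₀ w₁' - Ψ (B₁ w₁') = y₀ := by
    rw [hBw₁', map_zero, sub_zero, hB₀u₀]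
  -- `DD 0 = 0`
  have hDD0 : DD (0 : V) = 0 := by
    apply densExt
    intro r
    rw [hDDval 0 hW0 r]
    simp
  -- the closed subspace of Riesz representatives of `(DD + 𝒜) u`, over the
  -- homogeneous domain
  obtain ⟨K, hKmem⟩ : ∃ K : Submodule 𝕜 V, ∀ z : V,
      z ∈ K ↔ ∃ u, (u ∈ Wset ∧ B₀ u = Ψ (B₁ u)) ∧
        stmt18.rieszConj (DD u + 𝒜 u) = z := by
    refine ⟨{ carrier := setOf (fun z => ∃ u, (u ∈ Wset ∧ B₀ u = Ψ (B₁ u)) ∧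
                  stmt18.rieszConj (DD u + 𝒜 u) = z),
              add_mem' := ?_, zero_mem' := ?_, smul_mem' := ?_ }, fun z => Iff.rfl⟩
    · rintro a b ⟨u, hu, rfl⟩ ⟨u', hu', rfl⟩
      refine ⟨u + u', ⟨hWadd u hu.1 u' hu'.1, ?_⟩, ?_⟩
      · rw [hB₀add u hu.1 u' hu'.1, hB₁add u hu.1 u' hu'.1, map_add, hu.2, hu'.2]
      · rw [hDDadd u hu.1 u' hu'.1, map_add, add_add_add_comm, stmt18.rieszConj_add]
    · refine ⟨0, ⟨hW0, by rw [hB₀0, hB₁0, map_zero]⟩, ?_⟩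
      rw [hDD0, map_zero, add_zero, stmt18.rieszConj_zero]
    · rintro c a ⟨u, hu, rfl⟩
      refine ⟨c • u, ⟨hWsmul u hu.1 c, ?_⟩, ?_⟩
      · rw [hB₀smul u hu.1 c, hB₁smul u hu.1 c, hu.2]
        exact (Ψ.map_smul c (B₁ u)).symm
      · rw [hDDsmul u hu.1 c, show 𝒜 (c • u) = c • 𝒜 u from map_smul 𝒜 c u,
          show c • DD u + c • 𝒜 u = c • (DD u + 𝒜 u) from (smul_add c (DD u) (𝒜 u)).symm,
          stmt18.rieszConj_smul]
  -- `K` is closed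
  have hKclosed : IsClosed (K : Set V) := by
    apply IsSeqClosed.isClosed
    intro zs z hzs hz
    have hzs' := fun n => (hKmem (zs n)).mp (hzs n)
    choose us hus hJ using hzs'
    have hGn : ∀ n, DD (us n) + 𝒜 (us n)
        = (innerSLFlip 𝕜 (zs n) : V →SL[starRingEnd 𝕜] 𝕜) := by
      intro n
      apply stmt18.rieszConj_inj
      rw [hJ n, stmt18.rieszConj_innerSLFlip]
    have hbound : ∀ n m : ℕ, ‖us n - us m‖ ≤ ‖zs n - zs m‖ / α := by
      intro n m
      have hdW : us n - us m ∈ Wset := hWsub _ (hus n).1 _ (hus m).1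
      have hbc : B₀ (us n - us m) = Ψ (B₁ (us n - us m)) := by
        rw [hB₀sub _ (hus n).1 _ (hus m).1, hB₁sub _ (hus n).1 _ (hus m).1, map_sub,
          (hus n).2, (hus m).2]
      have hDDd : DD (us n - us m) = DD (us n) - DD (us m) :=
        hDDsub _ (hus n).1 _ (hus m).1
      have e1 : DD (us n - us m) + 𝒜 (us n - us m)
          = (innerSLFlip 𝕜 (zs n) : V →SL[starRingEnd 𝕜] 𝕜)
            - (innerSLFlip 𝕜 (zs m) : V →SL[starRingEnd 𝕜] 𝕜) := by
        rw [hDDd, map_sub, sub_add_sub_comm, hGn n, hGn m]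
      have hval : DD (us n - us m) (us n - us m) + 𝒜 (us n - us m) (us n - us m)
          = (inner 𝕜 (us n - us m) (zs n - zs m) : 𝕜) := by
        have e2 := congrArg (fun T : V →SL[starRingEnd 𝕜] 𝕜 => T (us n - us m)) e1
        simpa only [ContinuousLinearMap.add_apply, ContinuousLinearMap.sub_apply,
          innerSLFlip_apply_apply, inner_sub_right] using e2
      have hc := hcoer (us n - us m)
      have hnn : 0 ≤ RCLike.re (DD (us n - us m) (us n - us m)) := hpos _ hdW hbc
      have hcs : RCLike.re (inner 𝕜 (us n - us m) (zs n - zs m) : 𝕜)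
          ≤ ‖us n - us m‖ * ‖zs n - zs m‖ := re_inner_le_norm _ _
      have hsum := congrArg RCLike.re hval
      rw [map_add] at hsum
      apply stmt18.div_bound α _ _ hα (norm_nonneg _) (norm_nonneg _)
      nlinarith
    have hcsq : CauchySeq us := by
      have hzc : CauchySeq zs := hz.cauchySeq
      rw [Metric.cauchySeq_iff] at hzc ⊢
      intro ε hε
      obtain ⟨N, hN⟩ := hzc (α * ε) (by positivity)
      refine ⟨N, fun n hn m hm => ?_⟩
      have h1 := hbound n m
      have h2 := hN n hn m hm
      rw [dist_eq_norm] at h2 ⊢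
      calc ‖us n - us m‖ ≤ ‖zs n - zs m‖ / α := h1
        _ < (α * ε) / α := by gcongr
        _ = ε := by field_simp
    obtain ⟨u, husu⟩ := cauchySeq_tendsto_of_complete hcsq
    have husn : Tendsto (fun n => ‖us n - u‖) atTop (𝓝 0) :=
      tendsto_iff_norm_sub_tendsto_zero.mp husu
    have hflipnorm : ∀ w : V, ‖(innerSLFlip 𝕜 w : V →SL[starRingEnd 𝕜] 𝕜)‖ ≤ ‖w‖ := by
      intro w
      apply ContinuousLinearMap.opNorm_le_bound _ (norm_nonneg _)
      intro x
      rw [innerSLFlip_apply_apply]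
      calc ‖(inner 𝕜 x w : 𝕜)‖ ≤ ‖x‖ * ‖w‖ := norm_inner_le_norm _ _
        _ = ‖w‖ * ‖x‖ := mul_comm _ _
    have hDDlim : Tendsto
        (fun n => ‖DD (us n) - ((innerSLFlip 𝕜 z : V →SL[starRingEnd 𝕜] 𝕜) - 𝒜 u)‖)
        atTop (𝓝 0) := by
      have hb : ∀ n, ‖DD (us n) - ((innerSLFlip 𝕜 z : V →SL[starRingEnd 𝕜] 𝕜) - 𝒜 u)‖
          ≤ ‖zs n - z‖ + ‖𝒜‖ * ‖us n - u‖ := by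
        intro n
        have e1 : DD (us n) = (innerSLFlip 𝕜 (zs n) : V →SL[starRingEnd 𝕜] 𝕜) - 𝒜 (us n) :=
          eq_sub_of_add_eq (hGn n)
        rw [e1, show (innerSLFlip 𝕜 (zs n) : V →SL[starRingEnd 𝕜] 𝕜) - 𝒜 (us n)
            - ((innerSLFlip 𝕜 z : V →SL[starRingEnd 𝕜] 𝕜) - 𝒜 u)
            = ((innerSLFlip 𝕜 (zs n) : V →SL[starRingEnd 𝕜] 𝕜)
              - (innerSLFlip 𝕜 z : V →SL[starRingEnd 𝕜] 𝕜)) - (𝒜 (us n) - 𝒜 u) by abel]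
        calc ‖((innerSLFlip 𝕜 (zs n) : V →SL[starRingEnd 𝕜] 𝕜)
              - (innerSLFlip 𝕜 z : V →SL[starRingEnd 𝕜] 𝕜)) - (𝒜 (us n) - 𝒜 u)‖
            ≤ ‖(innerSLFlip 𝕜 (zs n) : V →SL[starRingEnd 𝕜] 𝕜)
              - (innerSLFlip 𝕜 z : V →SL[starRingEnd 𝕜] 𝕜)‖ + ‖𝒜 (us n) - 𝒜 u‖ :=
              norm_sub_le _ _
          _ ≤ ‖zs n - z‖ + ‖𝒜‖ * ‖us n - u‖ := by
              gcongr
              · rw [show (innerSLFlip 𝕜 (zs n) : V →SL[starRingEnd 𝕜] 𝕜)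
                    - (innerSLFlip 𝕜 z : V →SL[starRingEnd 𝕜] 𝕜)
                    = (innerSLFlip 𝕜 (zs n - z) : V →SL[starRingEnd 𝕜] 𝕜) from
                    (map_sub (innerSLFlip 𝕜) (zs n) z).symm]
                exact hflipnorm _
              · rw [show 𝒜 (us n) - 𝒜 u = 𝒜 (us n - u) from (map_sub 𝒜 (us n) u).symm]
                exact 𝒜.le_opNorm _
      have hlim0 : Tendsto (fun n => ‖zs n - z‖ + ‖𝒜‖ * ‖us n - u‖) atTop (𝓝 0) := by
        have h1 : Tendsto (fun n => ‖zs n - z‖) atTop (𝓝 0) :=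
          tendsto_iff_norm_sub_tendsto_zero.mp hz
        have h2 := husn.const_mul ‖𝒜‖
        simpa using h1.add h2
      exact squeeze_zero (fun n => norm_nonneg _) hb hlim0
    -- the limit functional
    have hWit : ∀ r : R, ((innerSLFlip 𝕜 z : V →SL[starRingEnd 𝕜] 𝕜) - 𝒜 u) (r : V)
        + (starRingEnd 𝕜) (D0 r u) = 0 := by
      intro r
      have t1 : Tendsto (fun n => DD (us n) (r : V)) atTop
          (𝓝 (((innerSLFlip 𝕜 z : V →SL[starRingEnd 𝕜] 𝕜) - 𝒜 u) (r : V))) := by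
        rw [tendsto_iff_norm_sub_tendsto_zero]
        apply squeeze_zero (fun n => norm_nonneg _)
          (g := fun n => ‖DD (us n) - ((innerSLFlip 𝕜 z : V →SL[starRingEnd 𝕜] 𝕜) - 𝒜 u)‖
            * ‖(r : V)‖)
        · intro n
          have := (DD (us n) - ((innerSLFlip 𝕜 z : V →SL[starRingEnd 𝕜] 𝕜) - 𝒜 u)).le_opNorm
            (r : V)
          simpa [ContinuousLinearMap.sub_apply] using this
        · simpa using hDDlim.mul_const ‖(r : V)‖
      have t2 : Tendsto (fun n => DD (us n) (r : V)) atTop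
          (𝓝 (-(starRingEnd 𝕜) (D0 r u))) := by
        have hD : Tendsto (fun n => D0 r (us n)) atTop (𝓝 (D0 r u)) :=
          ((D0 r).continuous.tendsto u).comp husu
        have hDc : Tendsto (fun n => (starRingEnd 𝕜) (D0 r (us n))) atTop
            (𝓝 ((starRingEnd 𝕜) (D0 r u))) := (continuous_star.tendsto _).comp hD
        exact hDc.neg.congr (fun n => (hDDval _ (hus n).1 r).symm)
      have := tendsto_nhds_unique t1 t2
      rw [this, neg_add_cancel]
    have huW : u ∈ Wset := by
      rw [hWset]
      exact ⟨(innerSLFlip 𝕜 z : V →SL[starRingEnd 𝕜] 𝕜) - 𝒜 u, hWit⟩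
    have hDDu : DD u = (innerSLFlip 𝕜 z : V →SL[starRingEnd 𝕜] 𝕜) - 𝒜 u := by
      apply densExt
      intro r
      rw [hDDval u huW r]
      have := hWit r
      linear_combination -this
    -- passage to the limit in the boundary condition
    have hgr : Tendsto (fun n => ‖us n - u‖ + ‖DD (us n) - DD u‖) atTop (𝓝 0) := by
      rw [hDDu]
      simpa using husn.add hDDlim
    obtain ⟨C₀, hC₀⟩ := hB₀bdd
    obtain ⟨C₁, hC₁⟩ := hB₁bdd
    have hB0t : Tendsto (fun n => B₀ (us n)) atTop (𝓝 (B₀ u)) := by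
      rw [tendsto_iff_norm_sub_tendsto_zero]
      apply squeeze_zero (fun n => norm_nonneg _)
        (g := fun n => C₀ * (‖us n - u‖ + ‖DD (us n) - DD u‖))
      · intro n
        have hWd : us n - u ∈ Wset := hWsub _ (hus n).1 u huW
        have h := hC₀ (us n - u) hWd
        rw [hB₀sub _ (hus n).1 u huW, hDDsub _ (hus n).1 u huW] at h
        exact h
      · simpa using hgr.const_mul C₀
    have hB1t : Tendsto (fun n => B₁ (us n)) atTop (𝓝 (B₁ u)) := by
      rw [tendsto_iff_norm_sub_tendsto_zero]
      apply squeeze_zero (fun n => norm_nonneg _)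
        (g := fun n => C₁ * (‖us n - u‖ + ‖DD (us n) - DD u‖))
      · intro n
        have hWd : us n - u ∈ Wset := hWsub _ (hus n).1 u huW
        have h := hC₁ (us n - u) hWd
        rw [hB₁sub _ (hus n).1 u huW, hDDsub _ (hus n).1 u huW] at h
        exact h
      · simpa using hgr.const_mul C₁
    have hΨt : Tendsto (fun n => Ψ (B₁ (us n))) atTop (𝓝 (Ψ (B₁ u))) := by
      rw [tendsto_iff_norm_sub_tendsto_zero]
      apply squeeze_zero (fun n => norm_nonneg _) (g := fun n => ‖B₁ (us n) - B₁ u‖)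
      · intro n
        have hWd : us n - u ∈ Wset := hWsub _ (hus n).1 u huW
        have e : Ψ (B₁ (us n)) - Ψ (B₁ u) = Ψ (B₁ (us n - u)) := by
          rw [hB₁sub _ (hus n).1 u huW, map_sub]
        rw [e, ← hB₁sub _ (hus n).1 u huW]
        exact hΨcontr _ hWd
      · exact tendsto_iff_norm_sub_tendsto_zero.mp hB1t
    have hbcu : B₀ u = Ψ (B₁ u) :=
      tendsto_nhds_unique (hB0t.congr (fun n => (hus n).2)) hΨt
    refine (hKmem z).mpr ⟨u, ⟨huW, hbcu⟩, ?_⟩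
    rw [show DD u + 𝒜 u = (innerSLFlip 𝕜 z : V →SL[starRingEnd 𝕜] 𝕜) from by
      rw [hDDu]; abel, stmt18.rieszConj_innerSLFlip]
  -- `K = ⊤` via a triviality of the orthogonal complement
  haveI : CompleteSpace K := hKclosed.completeSpace_coe
  have hKtop : K = ⊤ := by
    rw [← Submodule.orthogonal_eq_bot_iff, Submodule.eq_bot_iff]
    intro w hw
    rw [Submodule.mem_orthogonal] at hw
    -- `w` annihilates `(DD + 𝒜) u` for all `u` in the homogeneous domain
    have horth : ∀ u, u ∈ Wset → B₀ u = Ψ (B₁ u) → DD u w + 𝒜 u w = 0 := by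
      intro u hu hbu
      have hz : stmt18.rieszConj (DD u + 𝒜 u) ∈ K :=
        (hKmem _).mpr ⟨u, ⟨hu, hbu⟩, rfl⟩
      have h1 := hw _ hz
      rw [stmt18.inner_rieszConj] at h1
      have h2 := congrArg (starRingEnd 𝕜) h1
      rw [RCLike.conj_conj, map_zero] at h2
      exact h2
    -- in particular for `u ∈ R`, whence `w` belongs to `Wset`
    have hRorth : ∀ r : R, D0 r w + 𝒜 (r : V) w = 0 := by
      intro r
      have hrW : (r : V) ∈ Wset := hRW r
      have hrbc : B₀ (r : V) = Ψ (B₁ (r : V)) := by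
        rw [(hBR r).1, (hBR r).2, map_zero]
      have := horth (r : V) hrW hrbc
      rw [hDDR r] at this
      exact this
    have hWitw : ∀ r : R, stmt18.flipConj 𝒜 w (r : V) + (starRingEnd 𝕜) (D0 r w) = 0 := by
      intro r
      rw [stmt18.flipConj_apply, ← map_add]
      rw [show 𝒜 (r : V) w + D0 r w = D0 r w + 𝒜 (r : V) w from add_comm _ _, hRorth r,
        map_zero]
    have hwW : w ∈ Wset := by
      rw [hWset]
      exact ⟨stmt18.flipConj 𝒜 w, hWitw⟩
    have hDDw : DD w = stmt18.flipConj 𝒜 w := by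
      apply densExt
      intro r
      rw [hDDval w hwW r]
      have := hWitw r
      linear_combination -this
    have hDDwx : ∀ x : V, DD w x = (starRingEnd 𝕜) (𝒜 x w) := by
      intro x
      rw [hDDw, stmt18.flipConj_apply]
    -- the boundary identity
    have hbd : ∀ u, u ∈ Wset → B₀ u = Ψ (B₁ u) →
        (inner 𝕜 (B₁ w) (B₁ u) : 𝕜) = inner 𝕜 (B₀ w) (B₀ u) := by
      intro u hu hbu
      have h1 := hfact u hu w hwW
      rw [hDDwx u, RCLike.conj_conj] at h1
      have h2 := horth u hu hbu
      have : (inner 𝕜 (B₁ w) (B₁ u) : 𝕜) - inner 𝕜 (B₀ w) (B₀ u) = 0 := by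
        rw [← h1, h2]
      linear_combination this
    -- every `B₁`-trace is attained on the homogeneous domain
    have hdom : ∀ v, v ∈ Wset → ∃ u, u ∈ Wset ∧ B₀ u = Ψ (B₁ u) ∧ B₁ u = B₁ v := by
      intro v hv
      obtain ⟨w', hw'W, hww'⟩ := hΨrange v hv
      have hdW : w' - v ∈ Wset := hWsub w' hw'W v hv
      obtain ⟨d₀, hd₀W, d₁, hd₁W, hB₀d₀, hB₁d₁, hsum⟩ := hker (w' - v) hdW
      refine ⟨v + d₁, hWadd v hv d₁ hd₁W, ?_, ?_⟩
      · have e0 : B₀ (w' - v) = B₀ d₀ + B₀ d₁ := by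
          rw [hsum, hB₀add d₀ hd₀W d₁ hd₁W]
        rw [hB₀sub w' hw'W v hv, hB₀d₀, zero_add] at e0
        have e1 : B₀ (v + d₁) = B₀ v + B₀ d₁ := hB₀add v hv d₁ hd₁W
        have e2 : B₁ (v + d₁) = B₁ v + B₁ d₁ := hB₁add v hv d₁ hd₁W
        rw [e1, e2, hB₁d₁, add_zero, ← e0, ← hww']
        abel
      · rw [hB₁add v hv d₁ hd₁W, hB₁d₁, add_zero]
    -- conclude `B₁ w = Φ (B₀ w)`
    have hB1orth : ∀ v, v ∈ Wset → (inner 𝕜 (B₁ w - Φ (B₀ w)) (B₁ v) : 𝕜) = 0 := by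
      intro v hv
      obtain ⟨u, huW, hubc, huB1⟩ := hdom v hv
      have h1 := hbd u huW hubc
      rw [hubc, huB1] at h1
      have h2 : (inner 𝕜 (B₀ w) (Ψ (B₁ v)) : 𝕜) = inner 𝕜 (Φ (B₀ w)) (B₁ v) :=
        (hadj w hwW v hv).symm
      rw [inner_sub_left, h1, h2, sub_self]
    have hB1w : B₁ w = Φ (B₀ w) := by
      obtain ⟨v', hv'W, hv'⟩ := hΦrange w hwW
      have h1 := hB1orth w hwW
      have h2 := hB1orth v' hv'W
      rw [← hv'] at h2
      have : (inner 𝕜 (B₁ w - Φ (B₀ w)) (B₁ w - Φ (B₀ w)) : 𝕜) = 0 := by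
        rw [inner_sub_right, h1, h2, sub_self]
      have := inner_self_eq_zero.mp this
      exact sub_eq_zero.mp this
    have hnle : ‖B₁ w‖ ≤ ‖B₀ w‖ := by
      rw [hB1w]
      exact hΦcontr w hwW
    -- coercivity forces `w = 0`
    have hrew : 2 * RCLike.re (DD w w) = ‖B₁ w‖ ^ 2 - ‖B₀ w‖ ^ 2 := hre w hwW
    have hDDre : RCLike.re (DD w w) = RCLike.re (𝒜 w w) := by
      rw [hDDwx w]
      exact RCLike.conj_re _
    have hc := hcoer w
    have hsq : ‖w‖ ^ 2 ≤ 0 := by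
      nlinarith [norm_nonneg (B₀ w), norm_nonneg (B₁ w)]
    have hle : ‖w‖ ≤ 0 := by nlinarith [norm_nonneg w]
    have : ‖w‖ = 0 := le_antisymm hle (norm_nonneg w)
    simpa using norm_eq_zero.mp this
  -- surjectivity of `DD + 𝒜` on the homogeneous domain
  have surj : ∀ g : V →SL[starRingEnd 𝕜] 𝕜,
      ∃ u, (u ∈ Wset ∧ B₀ u = Ψ (B₁ u)) ∧ DD u + 𝒜 u = g := by
    intro g
    have : stmt18.rieszConj g ∈ K := by rw [hKtop]; trivial
    obtain ⟨u, hu, hJ⟩ := (hKmem _).mp this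
    exact ⟨u, hu, stmt18.rieszConj_inj hJ⟩
  -- assembly
  obtain ⟨u', ⟨hu'W, hu'bc⟩, hu'eq⟩ := surj (f - (DD w₁' + 𝒜 w₁'))
  have huW : u' + w₁' ∈ Wset := hWadd u' hu'W w₁' hw₁'W
  have hueq : DD (u' + w₁') + 𝒜 (u' + w₁') = f := by
    rw [hDDadd u' hu'W w₁' hw₁'W, map_add, add_add_add_comm, hu'eq]
    abel
  have hubc : B₀ (u' + w₁') - Ψ (B₁ (u' + w₁')) = y₀ := by
    rw [hB₀add u' hu'W w₁' hw₁'W, hB₁add u' hu'W w₁' hw₁'W, map_add,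
      show B₀ u' + B₀ w₁' - (Ψ (B₁ u') + Ψ (B₁ w₁'))
        = (B₀ u' - Ψ (B₁ u')) + (B₀ w₁' - Ψ (B₁ w₁')) from by abel,
      hu'bc, sub_self, zero_add, hbc₀]
  exact ⟨u' + w₁', ⟨huW, hueq, hubc⟩, fun y hy => uniq y (u' + w₁') hy ⟨huW, hueq, hubc⟩⟩
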